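/- Every nonzero ideal of K[x₁,…,xₙ] possesses a minimal Janet basis with respect to any monomial ordering ≺: a Janet basis G of I such that LM(G) ⊆ LM(G̃) holds for every Janet basis G̃ of I. -/

import Mathlib

open scoped MonomialOrder

/-- The variable `i` is Janet-multiplicative for the monomial `u` with respect to the
finite set of monomials `U` (monomials are identified with exponent vectors). -/
def JanetMult {n : ℕ} (U : Finset (Fin n →₀ ℕ)) (u : Fin n →₀ ℕ) (i : Fin n) : Prop :=
  ∀ v ∈ U, (∀ j, j < i → v j = u j) → v i ≤ u i

/-- The Janet cone `J(u,U)`: all monomials `u·m` where `m` is a product of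
Janet-multiplicative variables of `u` w.r.t. `U`. -/
def JanetCone {n : ℕ} (U : Finset (Fin n →₀ ℕ)) (u : Fin n →₀ ℕ) : Set (Fin n →₀ ℕ) :=
  { w | (∀ i, u i ≤ w i) ∧ ∀ i, u i < w i → JanetMult U u i }

/-- The leading monomial (exponent vector) of a polynomial w.r.t. a monomial order. -/
noncomputable def LM {n : ℕ} {K : Type*} [Field K] (m : MonomialOrder (Fin n))
    (f : MvPolynomial (Fin n) K) : Fin n →₀ ℕ :=
  m.toSyn.symm (f.support.sup fun c => m.toSyn c)

/-- `f` has a Janet standard representation w.r.t. the finite polynomial set `G`: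
`f = Σ_{g ∈ G} h_g · g` where every monomial of each nonzero `h_g` is a product of
Janet-multiplicative variables of `LM(g)` w.r.t. `LM(G)`, and `LM(h_g·g) ≼ LM(f)`. -/
def JanetSR {n : ℕ} {K : Type*} [Field K] (m : MonomialOrder (Fin n))
    (G : Finset (MvPolynomial (Fin n) K)) (f : MvPolynomial (Fin n) K) : Prop :=
  ∃ h : MvPolynomial (Fin n) K → MvPolynomial (Fin n) K,
    f = ∑ g ∈ G, h g * g ∧
    ∀ g ∈ G, h g ≠ 0 →
      (∀ c ∈ (h g).support, ∀ i, c i ≠ 0 → JanetMult (G.image (LM m)) (LM m g) i) ∧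
      (LM m (h g * g) ≼[m] LM m f)

/-- `G` is a Janet basis of the ideal `I` w.r.t. the monomial order `m`. -/
def JanetBasis {n : ℕ} {K : Type*} [Field K] (m : MonomialOrder (Fin n))
    (I : Ideal (MvPolynomial (Fin n) K)) (G : Finset (MvPolynomial (Fin n) K)) : Prop :=
  (∀ g ∈ G, g ≠ 0) ∧ (↑G : Set (MvPolynomial (Fin n) K)) ⊆ I ∧
    ∀ f ∈ I, f ≠ 0 → ∃ g ∈ G, LM m f ∈ JanetCone (G.image (LM m)) (LM m g)

/- auxiliary -/
def UpClosed {n : ℕ} (S : Set (Fin n →₀ ℕ)) : Prop :=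
  ∀ ⦃s t : Fin n →₀ ℕ⦄, s ∈ S → (∀ i, s i ≤ t i) → t ∈ S

def JanetComplete {n : ℕ} (S : Set (Fin n →₀ ℕ)) (U : Finset (Fin n →₀ ℕ)) : Prop :=
  ↑U ⊆ S ∧ ∀ s ∈ S, ∃ u ∈ U, s ∈ JanetCone U u

noncomputable def layer {n : ℕ} (d : ℕ) (U : Finset (Fin (n+1) →₀ ℕ)) :
    Finset (Fin n →₀ ℕ) := by
  classical exact (U.filter fun v => v 0 = d).image Finsupp.tail

lemma mem_layer {n : ℕ} {d : ℕ} {U : Finset (Fin (n+1) →₀ ℕ)} {v' : Fin n →₀ ℕ} :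
    v' ∈ layer d U ↔ Finsupp.cons d v' ∈ U := by
  classical
  simp only [layer, Finset.mem_image, Finset.mem_filter]
  constructor
  · rintro ⟨v, ⟨hv, hv0⟩, rfl⟩
    rwa [← hv0, Finsupp.cons_tail]
  · intro h
    exact ⟨Finsupp.cons d v', ⟨h, Finsupp.cons_zero _ _⟩, Finsupp.tail_cons _ _⟩

lemma janetMult_zero {n : ℕ} {U : Finset (Fin (n+1) →₀ ℕ)} {u : Fin (n+1) →₀ ℕ} :
    JanetMult U u 0 ↔ ∀ v ∈ U, v 0 ≤ u 0 := by
  constructor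
  · intro h v hv
    exact h v hv (fun j hj => absurd hj (by simp))
  · intro h v hv _
    exact h v hv

lemma janetMult_succ {n : ℕ} {U : Finset (Fin (n+1) →₀ ℕ)} {u' : Fin n →₀ ℕ} {d : ℕ}
    {i : Fin n} :
    JanetMult U (Finsupp.cons d u') i.succ ↔ JanetMult (layer d U) u' i := by
  constructor
  · intro h v' hv' hj
    have hv : Finsupp.cons d v' ∈ U := mem_layer.mp hv'
    have := h (Finsupp.cons d v') hv ?_
    · simpa [Finsupp.cons_succ] using this
    · intro j hjlt
      induction j using Fin.cases with
      | zero => simp [Finsupp.cons_zero]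
      | succ j' =>
        have : j' < i := by simpa using hjlt
        simp only [Finsupp.cons_succ]
        exact hj j' this
  · intro h v hv hj
    have hv0 : v 0 = d := by
      have := hj 0 (Fin.succ_pos i)
      simpa [Finsupp.cons_zero] using this
    have hv' : Finsupp.tail v ∈ layer d U := by
      rw [mem_layer, ← hv0, Finsupp.cons_tail]; exact hv
    have := h (Finsupp.tail v) hv' ?_
    · simpa [Finsupp.tail, Finsupp.cons_succ, Fin.tail] using this
    · intro j hjlt
      have := hj j.succ (by simpa using hjlt)
      simpa [Finsupp.tail, Finsupp.cons_succ, Fin.tail] using this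

lemma cons_le_cons {n : ℕ} {d e : ℕ} {u v : Fin n →₀ ℕ} (hde : d ≤ e)
    (huv : ∀ i, u i ≤ v i) : ∀ i, Finsupp.cons d u i ≤ Finsupp.cons e v i := by
  intro i
  induction i using Fin.cases with
  | zero => simpa [Finsupp.cons_zero] using hde
  | succ j => simpa [Finsupp.cons_succ] using huv j

lemma exists_stab {n : ℕ} (T : ℕ → Set (Fin n →₀ ℕ)) (mono : Monotone T)
    (up : ∀ d, UpClosed (T d)) : ∃ D, ∀ e, T e ⊆ T D := by
  by_contra hcon
  push_neg at hcon
  have h : ∀ d : ℕ, ∃ p : ℕ × (Fin n →₀ ℕ), p.2 ∈ T p.1 ∧ p.2 ∉ T d := by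
    intro d
    obtain ⟨e, he⟩ := hcon d
    obtain ⟨x, hx1, hx2⟩ := Set.not_subset.mp he
    exact ⟨(e, x), hx1, hx2⟩
  choose p hp1 hp2 using h
  let a : ℕ → ℕ := fun k => Nat.rec 0 (fun _ ak => max (p ak).1 ak) k
  have ha : ∀ k, a (k+1) = max (p (a k)).1 (a k) := fun k => rfl
  have hamono : Monotone a := monotone_nat_of_le_succ fun k => by
    rw [ha]; exact le_max_right _ _
  set u : ℕ → (Fin n →₀ ℕ) := fun k => (p (a k)).2 with hu
  obtain ⟨i, j, hij, hle⟩ := (wellQuasiOrdered_le (α := Fin n →₀ ℕ))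
    u
  have h1 : u i ∈ T (a (i+1)) := mono (by rw [ha]; exact le_max_left _ _) (hp1 (a i))
  have h2 : u i ∈ T (a j) := mono (hamono hij) h1
  exact hp2 (a j) (up (a j) h2 (fun x => hle x))

theorem exists_min_complete : ∀ (n : ℕ) (S : Set (Fin n →₀ ℕ)), UpClosed S →
    ∃ U₀, JanetComplete S U₀ ∧ ∀ U, JanetComplete S U → U₀ ⊆ U := by
  intro n
  induction n with
  | zero =>
    intro S _
    by_cases hne : S.Nonempty
    · obtain ⟨s₀, hs₀⟩ := hne
      refine ⟨{s₀}, ⟨?_, ?_⟩, ?_⟩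
      · simpa using hs₀
      · intro s hs
        exact ⟨s₀, Finset.mem_singleton_self _, fun i => i.elim0, fun i => i.elim0⟩
      · intro U hU
        obtain ⟨u, hu, _⟩ := hU.2 s₀ hs₀
        have heq : u = s₀ := Finsupp.ext fun i => i.elim0
        rw [Finset.singleton_subset_iff, ← heq]
        exact hu
    · rw [Set.not_nonempty_iff_eq_empty] at hne
      subst hne
      exact ⟨∅, ⟨by simp, fun s hs => absurd hs (Set.notMem_empty s)⟩,
        fun U _ => Finset.empty_subset U⟩
  | succ n IH =>
    intro S hS
    classical
    set Sd : ℕ → Set (Fin n →₀ ℕ) := fun d => {u' | Finsupp.cons d u' ∈ S} with hSddef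
    have mem_Sd : ∀ {d u'}, u' ∈ Sd d ↔ Finsupp.cons d u' ∈ S := fun {d u'} => Iff.rfl
    have hSdup : ∀ d, UpClosed (Sd d) := fun d s t hs hst =>
      mem_Sd.mpr (hS (mem_Sd.mp hs) (cons_le_cons le_rfl hst))
    have hSdmono : Monotone Sd := fun d e hde u' hu' =>
      mem_Sd.mpr (hS (mem_Sd.mp hu') (cons_le_cons hde fun i => le_rfl))
    choose B hBcomp hBmin using fun d => IH (Sd d) (hSdup d)
    have hstab := exists_stab Sd hSdmono hSdup
    set D := Nat.find hstab with hDdef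
    have hDstab : ∀ e, Sd e ⊆ Sd D := Nat.find_spec hstab
    have hDmin : ∀ d, (∀ e, Sd e ⊆ Sd d) → D ≤ d := fun d h => Nat.find_min' hstab h
    set U₀ : Finset (Fin (n+1) →₀ ℕ) :=
      (Finset.range (D+1)).biUnion (fun d => (B d).image (Finsupp.cons d)) with hU₀def
    have mem_U₀ : ∀ {w}, w ∈ U₀ ↔ ∃ d ≤ D, ∃ u' ∈ B d, Finsupp.cons d u' = w := by
      intro w
      simp only [hU₀def, Finset.mem_biUnion, Finset.mem_range, Nat.lt_succ_iff,
        Finset.mem_image]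
    have layer_U₀ : ∀ d, d ≤ D → layer d U₀ = B d := by
      intro d hd
      ext v'
      rw [mem_layer, mem_U₀]
      constructor
      · rintro ⟨e, _, w', hw', hcons⟩
        have h0 : e = d := by
          have := congrArg (fun f : Fin (n+1) →₀ ℕ => f 0) hcons
          simpa [Finsupp.cons_zero] using this
        subst h0
        have hw : w' = v' := by
          have := congrArg Finsupp.tail hcons
          simpa [Finsupp.tail_cons] using this
        rwa [← hw]
      · intro hv'
        exact ⟨d, hd, v', hv', rfl⟩
    have layers_le : ∀ v ∈ U₀, v 0 ≤ D := by
      intro v hv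
      obtain ⟨d, hd, u', _, rfl⟩ := mem_U₀.mp hv
      simpa [Finsupp.cons_zero] using hd
    refine ⟨U₀, ⟨?_, ?_⟩, ?_⟩
    · -- U₀ ⊆ S
      intro w hw
      obtain ⟨d, _, u', hu', rfl⟩ := mem_U₀.mp (by exact_mod_cast hw)
      exact mem_Sd.mp ((hBcomp d).1 hu')
    · -- cover
      intro s hs
      set d' := min (s 0) D with hd'def
      have hsd : Finsupp.tail s ∈ Sd (s 0) := by
        rw [mem_Sd, Finsupp.cons_tail]; exact hs
      have hsd' : Finsupp.tail s ∈ Sd d' := by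
        rcases le_or_gt (s 0) D with h | h
        · rwa [hd'def, min_eq_left h]
        · rw [hd'def, min_eq_right h.le]; exact hDstab _ hsd
      obtain ⟨u', hu', hcone1, hcone2⟩ := (hBcomp d').2 _ hsd'
      refine ⟨Finsupp.cons d' u', mem_U₀.mpr ⟨d', min_le_right _ _, u', hu', rfl⟩, ?_, ?_⟩
      · intro i
        induction i using Fin.cases with
        | zero =>
          simp only [Finsupp.cons_zero]
          exact min_le_left _ _
        | succ j =>
          have := hcone1 j
          simpa [Finsupp.cons_succ, Finsupp.tail_apply] using this
      · intro i
        induction i using Fin.cases with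
        | zero =>
          intro hlt
          rw [janetMult_zero]
          intro v hv
          rw [Finsupp.cons_zero]
          have hdd : d' = D := by
            rcases le_or_gt (s 0) D with h | h
            · exfalso
              rw [hd'def, min_eq_left h, Finsupp.cons_zero] at hlt
              exact lt_irrefl _ hlt
            · rw [hd'def, min_eq_right h.le]
          rw [hdd]
          exact layers_le v hv
        | succ j =>
          intro hlt
          have hlt' : u' j < Finsupp.tail s j := by
            simpa [Finsupp.cons_succ, Finsupp.tail_apply] using hlt
          have := hcone2 j hlt'
          rw [janetMult_succ, layer_U₀ d' (min_le_right _ _)]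
          exact this
    · -- minimality
      intro U hU
      set E := U.sup (fun v => v 0) with hEdef
      have hEstab : ∀ e, Sd e ⊆ Sd E := by
        intro e s' hs'
        have hsS : Finsupp.cons (E + 1 + e) s' ∈ S :=
          hS (mem_Sd.mp hs') (cons_le_cons (by omega) fun i => le_rfl)
        obtain ⟨u, hu, hc1, hc2⟩ := hU.2 _ hsS
        have hu0le : u 0 ≤ E := Finset.le_sup (f := fun v : Fin (n+1) →₀ ℕ => v 0) hu
        have hu0lt : u 0 < Finsupp.cons (E + 1 + e) s' 0 := by
          rw [Finsupp.cons_zero]; omega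
        have hmult := hc2 0 hu0lt
        rw [janetMult_zero] at hmult
        have hu0 : u 0 = E := le_antisymm hu0le (Finset.sup_le hmult)
        have htail : Finsupp.tail u ∈ Sd E := by
          rw [mem_Sd, ← hu0, Finsupp.cons_tail]
          exact hU.1 hu
        refine hSdup E htail fun i => ?_
        have := hc1 i.succ
        simpa [Finsupp.cons_succ, Finsupp.tail_apply] using this
      have hDE : D ≤ E := hDmin E hEstab
      have hlayercomp : ∀ d, d ≤ E → JanetComplete (Sd d) (layer d U) := by
        intro d hd
        constructor
        · intro v' hv'
          have hv : Finsupp.cons d v' ∈ U := mem_layer.mp (by exact_mod_cast hv')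
          exact mem_Sd.mpr (hU.1 hv)
        · intro s' hs'
          obtain ⟨u, hu, hc1, hc2⟩ := hU.2 _ (mem_Sd.mp hs')
          have hu0le : u 0 ≤ d := by
            have := hc1 0
            simpa [Finsupp.cons_zero] using this
          have hu0 : u 0 = d := by
            rcases eq_or_lt_of_le hu0le with h | h
            · exact h
            · exfalso
              have hmult := hc2 0 (by rwa [Finsupp.cons_zero])
              rw [janetMult_zero] at hmult
              have : E ≤ u 0 := Finset.sup_le hmult
              have : u 0 ≤ E := Finset.le_sup (f := fun v : Fin (n+1) →₀ ℕ => v 0) hu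
              omega
          have huL : Finsupp.tail u ∈ layer d U := by
            rw [mem_layer, ← hu0, Finsupp.cons_tail]; exact hu
          refine ⟨Finsupp.tail u, huL, ?_, ?_⟩
          · intro i
            have := hc1 i.succ
            simpa [Finsupp.cons_succ, Finsupp.tail_apply] using this
          · intro i hlt
            have h2 : u i.succ < Finsupp.cons d s' i.succ := by
              rw [Finsupp.cons_succ]
              simpa [Finsupp.tail_apply] using hlt
            have hm := hc2 i.succ h2
            have hrw : u = Finsupp.cons d (Finsupp.tail u) := by
              rw [← hu0, Finsupp.cons_tail]
            rw [hrw] at hm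
            exact janetMult_succ.mp hm
      intro w hw
      obtain ⟨d, hd, u', hu', rfl⟩ := mem_U₀.mp hw
      have := hBmin d (layer d U) (hlayercomp d (hd.trans hDE)) hu'
      exact mem_layer.mp this

section LMfacts

variable {n : ℕ} {K : Type*} [Field K] (m : MonomialOrder (Fin n))

lemma LM_mem_support {f : MvPolynomial (Fin n) K} (hf : f ≠ 0) : LM m f ∈ f.support := by
  obtain ⟨b, hb, hsup⟩ := Finset.exists_mem_eq_sup f.support
    (MvPolynomial.support_nonempty.mpr hf) (fun c => m.toSyn c)
  rw [LM, hsup, AddEquiv.symm_apply_apply]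
  exact hb

lemma le_LM {f : MvPolynomial (Fin n) K} {c : Fin n →₀ ℕ} (hc : c ∈ f.support) :
    m.toSyn c ≤ m.toSyn (LM m f) := by
  rw [LM, AddEquiv.apply_symm_apply]
  exact Finset.le_sup (f := fun c => m.toSyn c) hc

instance : IsCancelAdd (Fin n →₀ ℕ) where
  add_left_cancel a b c h := by
    ext i
    have := congrArg (fun f : Fin n →₀ ℕ => f i) h
    simp only [Finsupp.add_apply] at this
    omega
  add_right_cancel a b c h := by
    ext i
    have := congrArg (fun f : Fin n →₀ ℕ => f i) h
    simp only [Finsupp.add_apply] at this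
    omega

lemma support_monomial_mul (c : Fin n →₀ ℕ) (f : MvPolynomial (Fin n) K) :
    (MvPolynomial.monomial c (1 : K) * f).support
      = f.support.map (addLeftEmbedding c) := by
  have := AddMonoidAlgebra.support_coeff_single_mul (k := K) (G := Fin n →₀ ℕ) f 1
    (fun y => by simp) c
  exact this

lemma LM_monomial_mul {f : MvPolynomial (Fin n) K} (hf : f ≠ 0) (c : Fin n →₀ ℕ) :
    LM m (MvPolynomial.monomial c (1 : K) * f) = c + LM m f := by
  have hsupp := support_monomial_mul c f
  have h1 : c + LM m f ∈ (MvPolynomial.monomial c (1 : K) * f).support := by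
    rw [hsupp, Finset.mem_map]
    exact ⟨LM m f, LM_mem_support m hf, addLeftEmbedding_apply c _⟩
  have h2 : ∀ e ∈ (MvPolynomial.monomial c (1 : K) * f).support,
      m.toSyn e ≤ m.toSyn (c + LM m f) := by
    intro e he
    rw [hsupp, Finset.mem_map] at he
    obtain ⟨d, hd, rfl⟩ := he
    rw [addLeftEmbedding_apply, map_add, map_add]
    exact add_le_add_right (le_LM m hd) _
  have hsup : (MvPolynomial.monomial c (1 : K) * f).support.sup (fun c => m.toSyn c)
      = m.toSyn (c + LM m f) :=
    le_antisymm (Finset.sup_le h2) (Finset.le_sup (f := fun c => m.toSyn c) h1)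
  rw [LM, hsup, AddEquiv.symm_apply_apply]

end LMfacts

set_option linter.unusedVariables false in
theorem exists_minimal_janetBasis {n : ℕ} {K : Type*} [Field K]
    (m : MonomialOrder (Fin n)) (I : Ideal (MvPolynomial (Fin n) K)) (hI : I ≠ ⊥) :
    ∃ G : Finset (MvPolynomial (Fin n) K), JanetBasis m I G ∧
      ∀ G' : Finset (MvPolynomial (Fin n) K), JanetBasis m I G' →
        G.image (LM m) ⊆ G'.image (LM m) := by
  classical
  set S : Set (Fin n →₀ ℕ) := {c | ∃ f, f ∈ I ∧ f ≠ 0 ∧ LM m f = c} with hSdef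
  have hSup : UpClosed S := by
    rintro s t ⟨f, hfI, hf0, rfl⟩ hst
    refine ⟨MvPolynomial.monomial (t - LM m f) 1 * f, Ideal.mul_mem_left _ _ hfI, ?_, ?_⟩
    · exact mul_ne_zero (fun h => one_ne_zero (MvPolynomial.monomial_eq_zero.mp h)) hf0
    · rw [LM_monomial_mul m hf0]
      ext i
      simp only [Finsupp.add_apply, Finsupp.tsub_apply]
      have := hst i
      omega
  obtain ⟨U₀, hU₀comp, hU₀min⟩ := exists_min_complete n S hSup
  have hpickex : ∀ u ∈ U₀, ∃ f, f ∈ I ∧ f ≠ 0 ∧ LM m f = u := fun u hu => hU₀comp.1 hu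
  choose! pick hpI hp0 hpLM using hpickex
  set G := U₀.image pick with hGdef
  have hGLM : G.image (LM m) = U₀ := by
    ext c
    simp only [hGdef, Finset.image_image, Finset.mem_image, Function.comp]
    constructor
    · rintro ⟨u, hu, rfl⟩
      rw [hpLM u hu]
      exact hu
    · intro hc
      exact ⟨c, hc, hpLM c hc⟩
  refine ⟨G, ⟨?_, ?_, ?_⟩, ?_⟩
  · intro g hg
    obtain ⟨u, hu, rfl⟩ := Finset.mem_image.mp hg
    exact hp0 u hu
  · intro g hg
    obtain ⟨u, hu, rfl⟩ := Finset.mem_image.mp (by exact_mod_cast hg)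
    exact hpI u hu
  · intro f hfI hf0
    obtain ⟨u, hu, hcone⟩ := hU₀comp.2 (LM m f) ⟨f, hfI, hf0, rfl⟩
    refine ⟨pick u, Finset.mem_image_of_mem pick hu, ?_⟩
    rw [hGLM, hpLM u hu]
    exact hcone
  · intro G' hG'
    rw [hGLM]
    apply hU₀min
    constructor
    · intro c hc
      obtain ⟨g, hg, rfl⟩ := Finset.mem_image.mp (by exact_mod_cast hc)
      exact ⟨g, hG'.2.1 hg, hG'.1 g hg, rfl⟩
    · rintro s ⟨f, hfI, hf0, rfl⟩
      obtain ⟨g, hg, hcone⟩ := hG'.2.2 f hfI hf0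
      exact ⟨LM m g, Finset.mem_image_of_mem _ hg, hcone⟩
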